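/- For any η > 0, the function h_η(x) = x / (1 - exp(-η x)) satisfies: the successive differences h_η(x+1) - h_η(x) for positive integers x are strictly increasing in x, and each such difference is strictly greater than 1/2. -/

import Mathlib

open Real Set

noncomputable def hEta (η x : ℝ) : ℝ := x / (1 - Real.exp (-η * x))

namespace AuxHEta

noncomputable def h1 (η x : ℝ) : ℝ :=
  (1 * (1 - Real.exp (-η * x)) - x * (η * Real.exp (-η * x))) / (1 - Real.exp (-η * x)) ^ 2

lemma denom_pos {η x : ℝ} (hη : 0 < η) (hx : 0 < x) : 0 < 1 - Real.exp (-η * x) := by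
  have : Real.exp (-η * x) < 1 := by
    rw [Real.exp_lt_one_iff]; nlinarith
  linarith

lemma hasDerivAt_exp_part (η x : ℝ) :
    HasDerivAt (fun y => Real.exp (-η * y)) (-η * Real.exp (-η * x)) x := by
  have h : HasDerivAt (fun y : ℝ => -η * y) (-η) x := by
    simpa using (hasDerivAt_id x).const_mul (-η)
  simpa [mul_comm] using h.exp

lemma hasDerivAt_denom (η x : ℝ) :
    HasDerivAt (fun y => 1 - Real.exp (-η * y)) (η * Real.exp (-η * x)) x := by
  have := (hasDerivAt_const x (1 : ℝ)).sub (hasDerivAt_exp_part η x)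
  simpa [Pi.sub_def] using this

lemma hasDerivAt_hEta {η x : ℝ} (hη : 0 < η) (hx : 0 < x) :
    HasDerivAt (hEta η) (h1 η x) x := by
  have hne : (1 - Real.exp (-η * x)) ≠ 0 := ne_of_gt (denom_pos hη hx)
  exact (hasDerivAt_id x).div (hasDerivAt_denom η x) hne

lemma keyA {t : ℝ} (ht : 0 < t) : 2 * (1 - Real.exp (-t)) < t * (1 + Real.exp (-t)) := by
  have hmono : StrictMonoOn
      (fun t : ℝ => t * (1 + Real.exp (-t)) - 2 * (1 - Real.exp (-t))) (Ici 0) := by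
    apply strictMonoOn_of_deriv_pos (convex_Ici 0)
    · fun_prop
    · intro x hx
      rw [interior_Ici] at hx
      have he : HasDerivAt (fun y : ℝ => Real.exp (-y)) (-Real.exp (-x)) x := by
        simpa using hasDerivAt_exp_part 1 x
      have hd : HasDerivAt
          (fun t : ℝ => t * (1 + Real.exp (-t)) - 2 * (1 - Real.exp (-t)))
          (1 * (1 + Real.exp (-x)) + x * (0 + -Real.exp (-x)) - 2 * (0 - -Real.exp (-x))) x := by
        exact (((hasDerivAt_id x).mul ((hasDerivAt_const x (1:ℝ)).add he)).sub
          (((hasDerivAt_const x (1:ℝ)).sub he).const_mul 2))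
      rw [hd.deriv]
      have h1 := Real.add_one_lt_exp (ne_of_gt hx)
      have h2 : Real.exp (-x) * Real.exp x = 1 := by
        rw [← Real.exp_add]; simp
      nlinarith [Real.exp_pos (-x), Real.exp_pos x]
  have h0 : (0:ℝ) ∈ Ici (0:ℝ) := Set.mem_Ici.mpr le_rfl
  have := hmono h0 (le_of_lt ht) ht
  simp only [neg_zero, Real.exp_zero] at this
  nlinarith [this]

lemma keyB {t : ℝ} (ht : 0 < t) :
    Real.exp (-t) * Real.exp (-t) + 2 * t * Real.exp (-t) < 1 := by
  have hs : t < Real.sinh t := Real.self_lt_sinh_iff.mpr ht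
  rw [Real.sinh_eq] at hs
  have h2 : Real.exp (-t) * Real.exp t = 1 := by rw [← Real.exp_add]; simp
  nlinarith [Real.exp_pos (-t), Real.exp_pos t]

lemma h1_gt_half {η x : ℝ} (hη : 0 < η) (hx : 0 < x) : 1 / 2 < h1 η x := by
  have hd := denom_pos hη hx
  rw [h1, lt_div_iff₀ (by positivity)]
  have hk := keyB (t := η * x) (by positivity)
  have : Real.exp (-η * x) = Real.exp (-(η * x)) := by ring_nf
  rw [this]
  nlinarith [hk]

lemma hasDerivAt_h1 {η x : ℝ} (hη : 0 < η) (hx : 0 < x) :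
    HasDerivAt (h1 η)
      ((x * (η ^ 2 * Real.exp (-η * x)) * (1 - Real.exp (-η * x)) ^ 2 -
        (1 * (1 - Real.exp (-η * x)) - x * (η * Real.exp (-η * x))) *
          (2 * (1 - Real.exp (-η * x)) ^ 1 * (η * Real.exp (-η * x)))) /
        ((1 - Real.exp (-η * x)) ^ 2) ^ 2) x := by
  have hne : (1 - Real.exp (-η * x)) ≠ 0 := ne_of_gt (denom_pos hη hx)
  have hN : HasDerivAt
      (fun y => 1 * (1 - Real.exp (-η * y)) - y * (η * Real.exp (-η * y)))
      (x * (η ^ 2 * Real.exp (-η * x))) x := by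
    have hprod : HasDerivAt (fun y => y * (η * Real.exp (-η * y)))
        (1 * (η * Real.exp (-η * x)) + x * (η * (-η * Real.exp (-η * x)))) x :=
      (hasDerivAt_id x).mul ((hasDerivAt_exp_part η x).const_mul η)
    have := ((hasDerivAt_denom η x).const_mul 1).sub hprod
    convert this using 1
    · rfl
    · rfl
    · rfl
    · ring
  have hD : HasDerivAt (fun y => (1 - Real.exp (-η * y)) ^ 2)
      (2 * (1 - Real.exp (-η * x)) ^ 1 * (η * Real.exp (-η * x))) x := by
    simpa [Pi.pow_def] using (hasDerivAt_denom η x).pow 2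
  exact hN.div hD (pow_ne_zero 2 hne)

lemma deriv_h1_pos {η x : ℝ} (hη : 0 < η) (hx : 0 < x) : 0 < deriv (h1 η) x := by
  rw [(hasDerivAt_h1 hη hx).deriv]
  set e := Real.exp (-η * x) with he
  have hepos : 0 < e := Real.exp_pos _
  have hd : 0 < 1 - e := denom_pos hη hx
  have hk : 2 * (1 - e) < η * x * (1 + e) := by
    have := keyA (t := η * x) (by positivity)
    have heq : Real.exp (-(η * x)) = e := by rw [he]; ring_nf
    rw [heq] at this
    linarith
  apply div_pos
  · nlinarith [mul_pos (mul_pos (mul_pos hη hepos) hd) (sub_pos.mpr hk)]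
  · positivity

lemma h1_strictMono {η : ℝ} (hη : 0 < η) : StrictMonoOn (h1 η) (Ioi 0) := by
  apply strictMonoOn_of_deriv_pos (convex_Ioi 0)
  · intro x hx
    exact ((hasDerivAt_h1 hη hx).continuousAt).continuousWithinAt
  · intro x hx
    rw [interior_Ioi] at hx
    exact deriv_h1_pos hη hx

lemma diff_strictMono {η : ℝ} (hη : 0 < η) :
    StrictMonoOn (fun x => hEta η (x + 1) - hEta η x) (Ioi 0) := by
  apply strictMonoOn_of_deriv_pos (convex_Ioi 0)
  · intro x hx
    have hx0 : (0:ℝ) < x := hx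
    have h1' : HasDerivAt (fun y => hEta η (y + 1)) (h1 η (x + 1) * 1) x :=
      (hasDerivAt_hEta hη (by linarith)).comp x ((hasDerivAt_id x).add_const 1)
    exact ((h1'.sub (hasDerivAt_hEta hη hx0)).continuousAt).continuousWithinAt
  · intro x hx
    rw [interior_Ioi] at hx
    have hx0 : (0:ℝ) < x := hx
    have hA : HasDerivAt (fun y => hEta η (y + 1)) (h1 η (x + 1) * 1) x :=
      (hasDerivAt_hEta hη (by linarith)).comp x ((hasDerivAt_id x).add_const 1)
    have hd := hA.sub (hasDerivAt_hEta hη hx0)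
    rw [show (fun x => hEta η (x + 1) - hEta η x) = (fun y => hEta η (y + 1)) - hEta η from rfl,
      hd.deriv]
    have : h1 η x < h1 η (x + 1) :=
      h1_strictMono hη hx (by simp; linarith) (by linarith)
    linarith

end AuxHEta

open AuxHEta in
/-- For any `η > 0`, the successive differences `h_η(x+1) - h_η(x)` over positive
integers `x` are strictly increasing, and each difference is greater than `1/2`. -/
theorem stmt_1 (η : ℝ) (hη : 0 < η) :
    (∀ x y : ℕ, 0 < x → x < y →
      hEta η (x + 1) - hEta η x < hEta η (y + 1) - hEta η y) ∧
    (∀ x : ℕ, 0 < x → hEta η (x + 1) - hEta η x > 1 / 2) := by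
  constructor
  · intro x y hx hxy
    have hx' : (0:ℝ) < x := by exact_mod_cast hx
    have hy' : (0:ℝ) < y := by
      have : (0:ℕ) < y := lt_trans hx hxy
      exact_mod_cast this
    have hxy' : (x:ℝ) < y := by exact_mod_cast hxy
    exact diff_strictMono hη hx' hy' hxy'
  · intro x hx
    have hx' : (0:ℝ) < x := by exact_mod_cast hx
    obtain ⟨c, hc, hceq⟩ := exists_hasDerivAt_eq_slope (hEta η) (h1 η)
      (by linarith : (x:ℝ) < x + 1)
      (fun y hy => ((hasDerivAt_hEta hη (by
        have := hy.1; linarith : (0:ℝ) < y)).continuousAt).continuousWithinAt)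
      (fun y hy => hasDerivAt_hEta hη (by have := hy.1; linarith))
    have hcpos : (0:ℝ) < c := by have := hc.1; linarith
    have := h1_gt_half hη hcpos
    rw [hceq] at this
    simp only [add_sub_cancel_left] at this
    linarith [this]
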